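/- Assume F : H → H is monotone and Lipschitz-continuous with constant L > 0 and the solution set S of the variational inequality on C is nonempty. Let (x_n) and (y_n) be the sequences generated by the projected reflected gradient algorithm: x_0 = y_0 ∈ C, x_{n+1} = P_C(x_n − λ F(y_n)) and y_{n+1} = 2x_{n+1} − x_n, where λ ∈ (0, (√2 − 1)/L). Then (x_n) converges weakly to some point x* ∈ S. -/

import Mathlib

open RealInnerProductSpace

open Filter


section Aux
variable {H : Type*} [NormedAddCommGroup H] [InnerProductSpace ℝ H]

/-- Three-point identity. -/
theorem three_point_aux (a b c : H) :
    2*⟪b - a, c - b⟫ = ‖a - c‖^2 - ‖b - c‖^2 - ‖b - a‖^2 := by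
  have h := norm_add_sq_real (a - b) (b - c)
  have h2 : a - b + (b - c) = a - c := by abel
  rw [h2] at h
  have h3 : ⟪a - b, b - c⟫ = ⟪b - a, c - b⟫ := by
    rw [← inner_neg_neg]; congr 1 <;> abel
  have h4 : ‖a - b‖ = ‖b - a‖ := norm_sub_rev _ _
  rw [h3, h4] at h
  linarith

theorem young_aux (a b c₁ c₂ k : ℝ) (hc₁ : 0 < c₁) (hprod : c₁ * c₂ = k ^ 2)
    : 2*k*(a*b) ≤ c₁*a^2 + c₂*b^2 := by
  nlinarith [sq_nonneg (c₁*a - k*b), sq_nonneg b, hc₁]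

theorem young_aux2 (a b k : ℝ) (hk : 0 ≤ k) : 2*k*(a*b) ≤ k*a^2 + k*b^2 := by
  nlinarith [sq_nonneg (a - b), hk]

theorem sq_tendsto_zero_aux {f : ℕ → ℝ} (h0 : ∀ n, 0 ≤ f n)
    (h : Tendsto (fun n => f n ^ 2) atTop (nhds 0)) : Tendsto f atTop (nhds 0) := by
  rw [Metric.tendsto_atTop] at h ⊢
  intro ε hε
  obtain ⟨N, hN⟩ := h (ε^2) (by positivity)
  refine ⟨N, fun n hn => ?_⟩
  have := hN n hn
  rw [Real.dist_eq] at this ⊢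
  simp only [sub_zero] at this ⊢
  rw [abs_of_nonneg (h0 n)]
  rw [abs_of_nonneg (by positivity : (0:ℝ) ≤ f n ^ 2)] at this
  nlinarith [h0 n]

end Aux



theorem weak_compact_aux {H : Type*} [NormedAddCommGroup H] [InnerProductSpace ℝ H]
    [CompleteSpace H] (u : ℕ → H) (R : ℝ) (hb : ∀ n, ‖u n‖ ≤ R) :
    ∃ φ : ℕ → ℕ, StrictMono φ ∧ ∃ p : H,
      ∀ v : H, Tendsto (fun j => ⟪u (φ j), v⟫) atTop (nhds ⟪p, v⟫) := by
  have hR0 : 0 ≤ R := le_trans (norm_nonneg _) (hb 0)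
  -- diagonal extraction via Tychonov + sequential compactness of metrizable compacts
  set g : ℕ → ℕ → ℝ := fun n i => ⟪u n, u i⟫ with hg
  have hgmem : ∀ n, g n ∈ Set.pi Set.univ (fun _ : ℕ => Set.Icc (-(R*R)) (R*R)) := by
    intro n i _
    have h1 : |⟪u n, u i⟫| ≤ ‖u n‖ * ‖u i‖ := abs_real_inner_le_norm _ _
    have h2 : ‖u n‖ * ‖u i‖ ≤ R * R :=
      mul_le_mul (hb n) (hb i) (norm_nonneg _) hR0
    have := abs_le.mp (h1.trans h2)
    exact ⟨this.1, this.2⟩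
  obtain ⟨l, -, φ, hφ, hconv⟩ :=
    (isCompact_univ_pi fun _ : ℕ => isCompact_Icc).isSeqCompact hgmem
  have hpt : ∀ i, Tendsto (fun j => ⟪u (φ j), u i⟫) atTop (nhds (l i)) := by
    intro i
    exact (tendsto_pi_nhds.mp hconv) i
  -- the span of the sequence and its closure
  set M : Submodule ℝ H := Submodule.span ℝ (Set.range u) with hM
  set K : Submodule ℝ H := M.topologicalClosure with hK
  haveI : CompleteSpace K := M.isClosed_topologicalClosure.completeSpace_coe
  have huK : ∀ n, u n ∈ K := fun n =>
    M.le_topologicalClosure (Submodule.subset_span ⟨n, rfl⟩)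
  -- convergence for v in the span
  have hconv_span : ∀ v ∈ M, ∃ c, Tendsto (fun j => ⟪u (φ j), v⟫) atTop (nhds c) := by
    intro v hv
    induction hv using Submodule.span_induction with
    | mem w hw =>
        obtain ⟨i, rfl⟩ := hw
        exact ⟨l i, hpt i⟩
    | zero => exact ⟨0, by simpa using (tendsto_const_nhds : Tendsto (fun _ : ℕ => (0:ℝ)) atTop _)⟩
    | add w₁ w₂ _ _ h₁ h₂ =>
        obtain ⟨c₁, hc₁⟩ := h₁; obtain ⟨c₂, hc₂⟩ := h₂
        exact ⟨c₁ + c₂, by simpa [inner_add_right] using hc₁.add hc₂⟩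
    | smul r w _ h =>
        obtain ⟨c, hc⟩ := h
        exact ⟨r * c, by simpa [real_inner_smul_right] using hc.const_mul r⟩
  -- convergence for v in the closure of the span
  have hconv_K : ∀ v ∈ K, ∃ c, Tendsto (fun j => ⟪u (φ j), v⟫) atTop (nhds c) := by
    intro v hv
    have hcauchy : CauchySeq (fun j => ⟪u (φ j), v⟫) := by
      rw [Metric.cauchySeq_iff]
      intro ε hε
      have hεR : 0 < ε / (4 * (R + 1)) := by positivity
      obtain ⟨w, hwM, hwd⟩ := Metric.mem_closure_iff.mp hv _ hεR
      obtain ⟨c, hc⟩ := hconv_span w hwM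
      have hccauchy : CauchySeq (fun j => ⟪u (φ j), w⟫) := hc.cauchySeq
      obtain ⟨N, hN⟩ := Metric.cauchySeq_iff.mp hccauchy (ε/2) (by linarith)
      refine ⟨N, fun m hm n hn => ?_⟩
      have key : ∀ j : ℕ, |⟪u (φ j), v⟫ - ⟪u (φ j), w⟫| ≤ ε / 4 := by
        intro j
        have : ⟪u (φ j), v⟫ - ⟪u (φ j), w⟫ = ⟪u (φ j), v - w⟫ := (inner_sub_right _ _ _).symm
        rw [this]
        calc |⟪u (φ j), v - w⟫| ≤ ‖u (φ j)‖ * ‖v - w‖ := abs_real_inner_le_norm _ _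
          _ ≤ R * (ε / (4 * (R + 1))) := by
              apply mul_le_mul (hb _) _ (norm_nonneg _) hR0
              rw [← dist_eq_norm]; exact le_of_lt hwd
          _ ≤ ε / 4 := by
              have hR1 : (0:ℝ) < R + 1 := by linarith
              calc R * (ε / (4 * (R + 1))) ≤ (R + 1) * (ε / (4 * (R + 1))) :=
                    mul_le_mul_of_nonneg_right (by linarith) (by positivity)
                _ = ε / 4 := by field_simp
      have h1 := key m
      have h2 := key n
      have h3 := hN m hm n hn
      rw [Real.dist_eq] at h3 ⊢
      have : ⟪u (φ m), v⟫ - ⟪u (φ n), v⟫ =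
          (⟪u (φ m), v⟫ - ⟪u (φ m), w⟫) + (⟪u (φ m), w⟫ - ⟪u (φ n), w⟫)
          + (⟪u (φ n), w⟫ - ⟪u (φ n), v⟫) := by ring
      rw [this]
      calc _ ≤ |⟪u (φ m), v⟫ - ⟪u (φ m), w⟫| + |⟪u (φ m), w⟫ - ⟪u (φ n), w⟫|
            + |⟪u (φ n), w⟫ - ⟪u (φ n), v⟫| := by
            exact (abs_add_three _ _ _)
        _ < ε := by
            rw [abs_sub_comm (⟪u (φ n), w⟫)] at *
            linarith [abs_sub_comm (⟪u (φ n), v⟫) (⟪u (φ n), w⟫)]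
    exact cauchySeq_tendsto_of_complete hcauchy
  -- convergence for all v via orthogonal projection
  have hconv_all : ∀ v : H, ∃ c, Tendsto (fun j => ⟪u (φ j), v⟫) atTop (nhds c) := by
    intro v
    have hdecomp : ∀ n, ⟪u n, v⟫ = ⟪u n, (K.orthogonalProjectionOnto v : H)⟫ := by
      intro n
      have horth : ⟪u n, v - (K.orthogonalProjectionOnto v : H)⟫ = 0 := by
        have := K.sub_starProjection_mem_orthogonal v
        exact (Submodule.mem_orthogonal K _).mp this (u n) (huK n)
      have : ⟪u n, v⟫ - ⟪u n, (K.orthogonalProjectionOnto v : H)⟫ = 0 := by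
        rw [← inner_sub_right]; exact horth
      linarith
    obtain ⟨c, hc⟩ := hconv_K ((K.orthogonalProjectionOnto v : H)) (K.orthogonalProjectionOnto v).2
    exact ⟨c, by simpa only [hdecomp] using hc⟩
  -- build the weak limit via Riesz representation
  classical
  set ell : H → ℝ := fun v => (hconv_all v).choose with hell
  have hℓ : ∀ v, Tendsto (fun j => ⟪u (φ j), v⟫) atTop (nhds (ell v)) :=
    fun v => (hconv_all v).choose_spec
  have hadd : ∀ v w, ell (v + w) = ell v + ell w := by
    intro v w
    refine tendsto_nhds_unique (hℓ (v + w)) ?_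
    simpa [inner_add_right] using (hℓ v).add (hℓ w)
  have hsmul : ∀ (r : ℝ) v, ell (r • v) = r * ell v := by
    intro r v
    refine tendsto_nhds_unique (hℓ (r • v)) ?_
    simpa [real_inner_smul_right] using (hℓ v).const_mul r
  have hbound : ∀ v, ‖ell v‖ ≤ R * ‖v‖ := by
    intro v
    rw [Real.norm_eq_abs]
    have : Tendsto (fun j => |⟪u (φ j), v⟫|) atTop (nhds |ell v|) := (hℓ v).abs
    refine le_of_tendsto this (Eventually.of_forall fun j => ?_)
    exact (abs_real_inner_le_norm _ _).trans
      (mul_le_mul_of_nonneg_right (hb _) (norm_nonneg _))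
  set Fℓ : H →L[ℝ] ℝ :=
    LinearMap.mkContinuous
      { toFun := ell, map_add' := hadd, map_smul' := hsmul } R hbound with hFℓ
  refine ⟨φ, hφ, (InnerProductSpace.toDual ℝ H).symm Fℓ, fun v => ?_⟩
  have : ⟪((InnerProductSpace.toDual ℝ H).symm Fℓ), v⟫ = Fℓ v :=
    InnerProductSpace.toDual_symm_apply
  rw [this]
  exact hℓ v

set_option maxHeartbeats 2000000 in

/-- Theorem 3.3: the projected reflected gradient algorithm converges weakly to a
solution of the variational inequality. -/
theorem weak_convergence_of_prg
    {H : Type*} [NormedAddCommGroup H] [InnerProductSpace ℝ H] [CompleteSpace H]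
    (C : Set H) (hC : C.Nonempty) (hCclosed : IsClosed C) (hCconv : Convex ℝ C)
    (P : H → H)
    (hPmem : ∀ u : H, P u ∈ C)
    (hPchar : ∀ u : H, ∀ y ∈ C, 0 ≤ ⟪P u - u, y - P u⟫)
    (F : H → H)
    (hmono : ∀ x y : H, 0 ≤ ⟪F x - F y, x - y⟫)
    (L : ℝ) (hL : 0 < L)
    (hlip : ∀ x y : H, ‖F x - F y‖ ≤ L * ‖x - y‖)
    (hS : ∃ z ∈ C, ∀ w ∈ C, 0 ≤ ⟪F z, w - z⟫)
    (lam : ℝ) (hlam : lam ∈ Set.Ioo (0 : ℝ) ((Real.sqrt 2 - 1) / L))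
    (x y : ℕ → H)
    (hx0 : x 0 ∈ C) (hy0 : y 0 = x 0)
    (hxrec : ∀ n : ℕ, x (n + 1) = P (x n - lam • F (y n)))
    (hyrec : ∀ n : ℕ, y (n + 1) = (2 : ℝ) • x (n + 1) - x n) :
    ∃ xstar : H, xstar ∈ C ∧ (∀ w ∈ C, 0 ≤ ⟪F xstar, w - xstar⟫) ∧
      ∀ f : H →L[ℝ] ℝ,
        Filter.Tendsto (fun n : ℕ => f (x n)) Filter.atTop (nhds (f xstar)) := by
  obtain ⟨hlam0, hlamu⟩ := hlam
  have hk0 : 0 < lam * L := mul_pos hlam0 hL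
  have hkk : lam * L < Real.sqrt 2 - 1 := by
    have := (lt_div_iff₀ hL).mp hlamu
    linarith
  have hsqrt2 : Real.sqrt 2 ^ 2 = 2 := Real.sq_sqrt (by norm_num)
  set k : ℝ := lam * L with hkdef
  have hsq : k ^ 2 + 2 * k < 1 := by nlinarith [Real.sqrt_nonneg 2]
  have hk2 : 0 < 1 - 2 * k := by nlinarith
  set c₂ : ℝ := (k ^ 2 + (1 - 2 * k)) / 2 with hc2def
  have hc₂pos : 0 < c₂ := by positivity
  have hk2c : k ^ 2 < c₂ := by
    simp only [hc2def]; nlinarith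
  have hc₂lt : c₂ + 2 * k < 1 := by
    simp only [hc2def]; nlinarith
  set c₁ : ℝ := k ^ 2 / c₂ with hc1def
  have hc₁pos : 0 < c₁ := by positivity
  have hc₁lt : c₁ < 1 := (div_lt_one hc₂pos).mpr hk2c
  have hprod : c₁ * c₂ = k ^ 2 := div_mul_cancel₀ _ (ne_of_gt hc₂pos)
  have hxC : ∀ n, x n ∈ C := by
    intro n
    cases n with
    | zero => exact hx0
    | succ m => rw [hxrec m]; exact hPmem _
  have hproj' : ∀ n, ∀ w ∈ C,
      0 ≤ ⟪x (n+1) - x n, w - x (n+1)⟫ + lam * ⟪F (y n), w - x (n+1)⟫ := by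
    intro n w hw
    have h := hPchar (x n - lam • F (y n)) w hw
    rw [← hxrec n] at h
    rw [show x (n+1) - (x n - lam • F (y n)) = (x (n+1) - x n) + lam • F (y n) from by module,
      inner_add_left, real_inner_smul_left] at h
    exact h
  -- MASTER: for every solution z', the distances converge; also step-size facts
  have master : ∀ z' ∈ C, (∀ w ∈ C, 0 ≤ ⟪F z', w - z'⟫) →
      (∃ gl : ℝ, Tendsto (fun n => ‖x n - z'‖ ^ 2) atTop (nhds gl)) ∧
      Tendsto (fun n => ‖x (n+1) - x n‖) atTop (nhds 0) ∧
      Tendsto (fun n => ‖x (n+1) - y n‖) atTop (nhds 0) := by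
    intro z hzC hz
    have key : ∀ n, ‖x (n+2) - z‖ ^ 2 + k * ‖x (n+2) - y (n+1)‖ ^ 2 + 2*lam*⟪F z, x (n+1) - z⟫
        + (2*lam*⟪F z, x (n+1) - z⟫ + (1-c₁) * ‖x (n+1) - x n‖ ^ 2
          + (1-c₂-2*k) * ‖x (n+2) - y (n+1)‖ ^ 2)
        ≤ ‖x (n+1) - z‖ ^ 2 + k * ‖x (n+1) - y n‖ ^ 2 + 2*lam*⟪F z, x n - z⟫ := by
      intro n
      have hq1 : y (n+1) = (2:ℝ) • x (n+1) - x n := hyrec n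
      have f1 := hproj' (n+1) z hzC
      have f2 := three_point_aux (x (n+1)) (x (n+2)) z
      have g1 : 0 ≤ ‖x (n+1) - z‖ ^ 2 - ‖x (n+2) - z‖ ^ 2 - ‖x (n+2) - x (n+1)‖ ^ 2
          + 2*lam*⟪F (y (n+1)), z - x (n+2)⟫ := by linarith
      have f3 : ⟪F (y (n+1)), z - y (n+1)⟫ ≤ ⟪F z, z - y (n+1)⟫ := by
        have hm := hmono (y (n+1)) z
        rw [inner_sub_left] at hm
        rw [show z - y (n+1) = -(y (n+1) - z) from by abel, inner_neg_right, inner_neg_right]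
        linarith
      have f4 : ⟪F (y (n+1)), z - x (n+2)⟫
          = ⟪F (y (n+1)), z - y (n+1)⟫ + ⟪F (y (n+1)), y (n+1) - x (n+2)⟫ := by
        rw [← inner_add_right]; congr 1; abel
      have f5 : ⟪F z, z - y (n+1)⟫ = ⟪F z, x n - z⟫ - 2*⟪F z, x (n+1) - z⟫ := by
        rw [show z - y (n+1) = (x n - z) - (2:ℝ) • (x (n+1) - z) from by rw [hq1]; module,
          inner_sub_right, real_inner_smul_right]
      have f6a : ⟪F (y (n+1)), y (n+1) - x (n+2)⟫
          = ⟪F (y (n+1)) - F (y n), y (n+1) - x (n+2)⟫ + ⟪F (y n), y (n+1) - x (n+2)⟫ := by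
        rw [inner_sub_left]; ring
      have f6b : ⟪F (y n), y (n+1) - x (n+2)⟫
          = ⟪F (y n), x (n+1) - x (n+2)⟫ + ⟪F (y n), x (n+1) - x n⟫ := by
        rw [← inner_add_right]; congr 1; rw [hq1]; module
      have f7 : lam * ⟪F (y n), x (n+1) - x (n+2)⟫ ≤ ⟪x (n+1) - x n, x (n+2) - x (n+1)⟫ := by
        have h := hproj' n (x (n+2)) (hxC (n+2))
        rw [show x (n+1) - x (n+2) = -(x (n+2) - x (n+1)) from by abel, inner_neg_right]
        linarith
      have f8 : lam * ⟪F (y n), x (n+1) - x n⟫ ≤ -‖x (n+1) - x n‖ ^ 2 := by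
        have h := hproj' n (x n) (hxC n)
        rw [show x n - x (n+1) = -(x (n+1) - x n) from by abel, inner_neg_right, inner_neg_right,
          real_inner_self_eq_norm_sq] at h
        linarith
      have f9 : 2*⟪x (n+1) - x n, x (n+2) - x (n+1)⟫
          = ‖x (n+1) - x n‖ ^ 2 + ‖x (n+2) - x (n+1)‖ ^ 2 - ‖x (n+2) - y (n+1)‖ ^ 2 := by
        have h := norm_sub_sq_real (x (n+2) - x (n+1)) (x (n+1) - x n)
        rw [show x (n+2) - x (n+1) - (x (n+1) - x n) = x (n+2) - y (n+1) from by
          rw [hq1]; module] at h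
        rw [real_inner_comm] at h
        linarith
      have f10 : ⟪F (y (n+1)) - F (y n), y (n+1) - x (n+2)⟫
          ≤ L * ((‖x (n+1) - x n‖ + ‖x (n+1) - y n‖) * ‖x (n+2) - y (n+1)‖) := by
        have hyy : ‖y (n+1) - y n‖ ≤ ‖x (n+1) - x n‖ + ‖x (n+1) - y n‖ := by
          rw [show y (n+1) - y n = (x (n+1) - x n) + (x (n+1) - y n) from by rw [hq1]; module]
          exact norm_add_le _ _
        calc ⟪F (y (n+1)) - F (y n), y (n+1) - x (n+2)⟫
            ≤ ‖F (y (n+1)) - F (y n)‖ * ‖y (n+1) - x (n+2)‖ := real_inner_le_norm _ _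
          _ = ‖F (y (n+1)) - F (y n)‖ * ‖x (n+2) - y (n+1)‖ := by rw [norm_sub_rev (y (n+1))]
          _ ≤ (L * ‖y (n+1) - y n‖) * ‖x (n+2) - y (n+1)‖ :=
              mul_le_mul_of_nonneg_right (hlip _ _) (norm_nonneg _)
          _ ≤ (L * (‖x (n+1) - x n‖ + ‖x (n+1) - y n‖)) * ‖x (n+2) - y (n+1)‖ :=
              mul_le_mul_of_nonneg_right (mul_le_mul_of_nonneg_left hyy hL.le) (norm_nonneg _)
          _ = L * ((‖x (n+1) - x n‖ + ‖x (n+1) - y n‖) * ‖x (n+2) - y (n+1)‖) := by ring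
      have m10 : 2*lam*⟪F (y (n+1)) - F (y n), y (n+1) - x (n+2)⟫
          ≤ 2*k*(‖x (n+1) - x n‖ * ‖x (n+2) - y (n+1)‖)
            + 2*k*(‖x (n+1) - y n‖ * ‖x (n+2) - y (n+1)‖) := by
        have h := mul_le_mul_of_nonneg_left f10 (by positivity : (0:ℝ) ≤ 2*lam)
        have e : 2*lam*(L * ((‖x (n+1) - x n‖ + ‖x (n+1) - y n‖) * ‖x (n+2) - y (n+1)‖))
            = 2*k*(‖x (n+1) - x n‖ * ‖x (n+2) - y (n+1)‖)
              + 2*k*(‖x (n+1) - y n‖ * ‖x (n+2) - y (n+1)‖) := by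
          rw [hkdef]; ring
        linarith
      have y1 : 2*k*(‖x (n+1) - x n‖ * ‖x (n+2) - y (n+1)‖)
          ≤ c₁ * ‖x (n+1) - x n‖ ^ 2 + c₂ * ‖x (n+2) - y (n+1)‖ ^ 2 := by
        exact young_aux _ _ _ _ _ hc₁pos hprod
      have y2 : 2*k*(‖x (n+1) - y n‖ * ‖x (n+2) - y (n+1)‖)
          ≤ k * ‖x (n+1) - y n‖ ^ 2 + k * ‖x (n+2) - y (n+1)‖ ^ 2 := by
        exact young_aux2 _ _ _ hk0.le
      have g4 : 2*lam*⟪F (y (n+1)), z - x (n+2)⟫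
          = 2*lam*⟪F (y (n+1)), z - y (n+1)⟫
            + 2*lam*⟪F (y (n+1)) - F (y n), y (n+1) - x (n+2)⟫
            + 2*lam*⟪F (y n), x (n+1) - x (n+2)⟫ + 2*lam*⟪F (y n), x (n+1) - x n⟫ := by
        linear_combination (2*lam) * f4 + (2*lam) * f6a + (2*lam) * f6b
      have g3 : 2*lam*⟪F (y (n+1)), z - y (n+1)⟫
          ≤ 2*lam*⟪F z, x n - z⟫ - 4*lam*⟪F z, x (n+1) - z⟫ := by
        have h := mul_le_mul_of_nonneg_left f3 (by positivity : (0:ℝ) ≤ 2*lam)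
        have h5 : 2*lam*⟪F z, z - y (n+1)⟫
            = 2*lam*⟪F z, x n - z⟫ - 4*lam*⟪F z, x (n+1) - z⟫ := by
          linear_combination (2*lam) * f5
        linarith
      linarith [g1, g4, g3, m10, y1, y2, f7, f8, f9]
    set G : ℕ → ℝ := fun m => ‖x (m+1) - z‖ ^ 2 + k * ‖x (m+1) - y m‖ ^ 2
      + 2*lam*⟪F z, x m - z⟫ with hG
    set ex : ℕ → ℝ := fun n => 2*lam*⟪F z, x (n+1) - z⟫ + (1-c₁) * ‖x (n+1) - x n‖ ^ 2
      + (1-c₂-2*k) * ‖x (n+2) - y (n+1)‖ ^ 2 with hex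
    have key' : ∀ n, G (n+1) + ex n ≤ G n := by
      intro n
      have h := key n
      simp only [hG, hex]
      linarith
    have ha_nonneg : ∀ m, 0 ≤ 2*lam*⟪F z, x m - z⟫ :=
      fun m => mul_nonneg (by positivity) (hz _ (hxC m))
    have hex_nonneg : ∀ n, 0 ≤ ex n := by
      intro n
      simp only [hex]
      have h1 := ha_nonneg (n+1)
      have h2 : 0 ≤ (1-c₁) * ‖x (n+1) - x n‖ ^ 2 :=
        mul_nonneg (by linarith) (sq_nonneg _)
      have h3 : 0 ≤ (1-c₂-2*k) * ‖x (n+2) - y (n+1)‖ ^ 2 :=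
        mul_nonneg (by linarith) (sq_nonneg _)
      linarith
    have hG_nonneg : ∀ n, 0 ≤ G n := by
      intro n
      simp only [hG]
      have h1 := ha_nonneg n
      have h2 : 0 ≤ k * ‖x (n+1) - y n‖ ^ 2 := mul_nonneg hk0.le (sq_nonneg _)
      have h3 : (0:ℝ) ≤ ‖x (n+1) - z‖ ^ 2 := sq_nonneg _
      linarith
    have hGanti : Antitone G :=
      antitone_nat_of_succ_le (fun n => by linarith [key' n, hex_nonneg n])
    have hGlim : Tendsto G atTop (nhds (⨅ n, G n)) := by
      refine tendsto_atTop_ciInf hGanti ⟨0, ?_⟩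
      rintro v ⟨n, rfl⟩
      exact hG_nonneg n
    have htel : ∀ N, (∑ n ∈ Finset.range N, ex n) + G N ≤ G 0 := by
      intro N
      induction N with
      | zero => simp
      | succ m ih => rw [Finset.sum_range_succ]; have := key' m; linarith
    have hsummable : Summable ex :=
      summable_of_sum_range_le (c := G 0) hex_nonneg (fun N => by linarith [htel N, hG_nonneg N])
    have hex0 : Tendsto ex atTop (nhds 0) := hsummable.tendsto_atTop_zero
    have hDsq : Tendsto (fun n => ‖x (n+1) - x n‖ ^ 2) atTop (nhds 0) := by
      have h1 : Tendsto (fun n => (1-c₁) * ‖x (n+1) - x n‖ ^ 2) atTop (nhds 0) := by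
        refine squeeze_zero (fun n => mul_nonneg (by linarith) (sq_nonneg _)) (fun n => ?_) hex0
        have h1 := ha_nonneg (n+1)
        have h3 : 0 ≤ (1-c₂-2*k) * ‖x (n+2) - y (n+1)‖ ^ 2 :=
          mul_nonneg (by linarith) (sq_nonneg _)
        simp only [hex]
        linarith
      have h2 := h1.const_mul (1/(1-c₁))
      rw [mul_zero] at h2
      refine h2.congr (fun n => ?_)
      have : (1:ℝ) - c₁ ≠ 0 := by linarith
      field_simp
    have hE1sq : Tendsto (fun n => ‖x (n+2) - y (n+1)‖ ^ 2) atTop (nhds 0) := by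
      have h1 : Tendsto (fun n => (1-c₂-2*k) * ‖x (n+2) - y (n+1)‖ ^ 2) atTop (nhds 0) := by
        refine squeeze_zero (fun n => mul_nonneg (by linarith) (sq_nonneg _)) (fun n => ?_) hex0
        have h1 := ha_nonneg (n+1)
        have h2 : 0 ≤ (1-c₁) * ‖x (n+1) - x n‖ ^ 2 := mul_nonneg (by linarith) (sq_nonneg _)
        simp only [hex]
        linarith
      have h2 := h1.const_mul (1/(1-c₂-2*k))
      rw [mul_zero] at h2
      refine h2.congr (fun n => ?_)
      have : (1:ℝ) - c₂ - 2*k ≠ 0 := by linarith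
      field_simp
    have hEsq : Tendsto (fun n => ‖x (n+1) - y n‖ ^ 2) atTop (nhds 0) :=
      (tendsto_add_atTop_iff_nat 1).mp hE1sq
    have haz1 : Tendsto (fun n => 2*lam*⟪F z, x (n+1) - z⟫) atTop (nhds 0) := by
      refine squeeze_zero (fun n => ha_nonneg (n+1)) (fun n => ?_) hex0
      have h2 : 0 ≤ (1-c₁) * ‖x (n+1) - x n‖ ^ 2 := mul_nonneg (by linarith) (sq_nonneg _)
      have h3 : 0 ≤ (1-c₂-2*k) * ‖x (n+2) - y (n+1)‖ ^ 2 :=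
        mul_nonneg (by linarith) (sq_nonneg _)
      simp only [hex]
      linarith
    have haz : Tendsto (fun n => 2*lam*⟪F z, x n - z⟫) atTop (nhds 0) :=
      (tendsto_add_atTop_iff_nat 1).mp haz1
    have hA1 : Tendsto (fun m => ‖x (m+1) - z‖ ^ 2) atTop (nhds (⨅ n, G n)) := by
      have h1 := (hGlim.sub (hEsq.const_mul k)).sub haz
      rw [mul_zero, sub_zero, sub_zero] at h1
      refine h1.congr (fun m => ?_)
      simp only [hG]
      ring
    have hA : Tendsto (fun n => ‖x n - z‖ ^ 2) atTop (nhds (⨅ n, G n)) :=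
      (tendsto_add_atTop_iff_nat 1).mp hA1
    exact ⟨⟨⨅ n, G n, hA⟩, sq_tendsto_zero_aux (fun n => norm_nonneg _) hDsq,
      sq_tendsto_zero_aux (fun n => norm_nonneg _) hEsq⟩
  -- pick the given solution, get bounds
  obtain ⟨z, hzC, hz⟩ := hS
  obtain ⟨⟨gl, hgl⟩, hD, hE⟩ := master z hzC hz
  obtain ⟨B, hB⟩ : BddAbove (Set.range (fun n => ‖x n - z‖ ^ 2)) := hgl.bddAbove_range
  set R : ℝ := ‖z‖ + 1 + B with hR
  have hxb : ∀ n, ‖x n‖ ≤ R := by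
    intro n
    have h1 : ‖x n - z‖ ^ 2 ≤ B := hB (Set.mem_range_self n)
    have h2 : ‖x n‖ ≤ ‖x n - z‖ + ‖z‖ := by
      calc ‖x n‖ = ‖(x n - z) + z‖ := by rw [sub_add_cancel]
        _ ≤ ‖x n - z‖ + ‖z‖ := norm_add_le _ _
    simp only [hR]
    nlinarith [norm_nonneg (x n - z), sq_nonneg (‖x n - z‖ - 1)]
  have hR0 : 0 ≤ R := le_trans (norm_nonneg _) (hxb 0)
  have hyb : ∀ n, ‖y n‖ ≤ 3*R := by
    intro n
    cases n with
    | zero => rw [hy0]; linarith [hxb 0]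
    | succ m =>
        rw [hyrec m]
        calc ‖(2:ℝ) • x (m+1) - x m‖ ≤ ‖(2:ℝ) • x (m+1)‖ + ‖x m‖ := norm_sub_le _ _
          _ = 2*‖x (m+1)‖ + ‖x m‖ := by rw [norm_smul]; simp
          _ ≤ 3*R := by linarith [hxb (m+1), hxb m]
  set B2 : ℝ := ‖F z‖ + L*(3*R + ‖z‖) with hB2
  have hFyb : ∀ n, ‖F (y n)‖ ≤ B2 := by
    intro n
    have h1 : ‖F (y n)‖ ≤ ‖F (y n) - F z‖ + ‖F z‖ := by
      calc ‖F (y n)‖ = ‖(F (y n) - F z) + F z‖ := by rw [sub_add_cancel]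
        _ ≤ ‖F (y n) - F z‖ + ‖F z‖ := norm_add_le _ _
    have h2 := hlip (y n) z
    have h3 : ‖y n - z‖ ≤ 3*R + ‖z‖ := le_trans (norm_sub_le _ _) (by linarith [hyb n])
    have h4 : L * ‖y n - z‖ ≤ L * (3*R + ‖z‖) := mul_le_mul_of_nonneg_left h3 hL.le
    simp only [hB2]
    linarith
  -- every weak sequential cluster point of (x n) is a solution
  have cluster : ∀ (p : H) (ψ : ℕ → ℕ), Tendsto ψ atTop atTop →
      (∀ v : H, Tendsto (fun j => ⟪x (ψ j), v⟫) atTop (nhds ⟪p, v⟫)) →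
      p ∈ C ∧ ∀ w ∈ C, 0 ≤ ⟪F p, w - p⟫ := by
    intro p ψ hψ hweak
    have hpC : p ∈ C := by
      by_contra hpc
      obtain ⟨f, u, hfb, hfu⟩ := geometric_hahn_banach_closed_point hCconv hCclosed hpc
      have hfv : ∀ q : H, f q = ⟪q, ((InnerProductSpace.toDual ℝ H).symm f : H)⟫ := fun q => by
        rw [real_inner_comm]; exact (InnerProductSpace.toDual_symm_apply).symm
      have hlimf : Tendsto (fun j => f (x (ψ j))) atTop (nhds (f p)) := by
        simp only [hfv]; exact hweak _
      have : f p ≤ u :=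
        le_of_tendsto hlimf (Eventually.of_forall fun j => (hfb _ (hxC (ψ j))).le)
      linarith
    refine ⟨hpC, ?_⟩
    -- Minty-type limit inequality
    have hMall : ∀ w ∈ C, 0 ≤ ⟪F w, w - p⟫ := by
      intro w hw
      obtain ⟨Cw, hCw⟩ : ∃ Cw : ℝ, Cw = (‖w‖ + R) / lam := ⟨_, rfl⟩
      set β : ℕ → ℝ := fun n => ‖x (n+1) - x n‖ * Cw
        + (B2 + ‖F w‖) * ‖x (n+1) - y n‖ with hβ
      have hVI : ∀ n, -β n ≤ ⟪F w, w - x (n+1)⟫ := by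
        intro n
        have h1 := hproj' n w hw
        have hcs1 : ⟪x (n+1) - x n, w - x (n+1)⟫ ≤ ‖x (n+1) - x n‖ * (‖w‖ + R) := by
          calc ⟪x (n+1) - x n, w - x (n+1)⟫ ≤ ‖x (n+1) - x n‖ * ‖w - x (n+1)‖ :=
                real_inner_le_norm _ _
            _ ≤ ‖x (n+1) - x n‖ * (‖w‖ + R) :=
                mul_le_mul_of_nonneg_left
                  (le_trans (norm_sub_le _ _) (by linarith [hxb (n+1)])) (norm_nonneg _)
        have h2' : -(‖x (n+1) - x n‖ * Cw) ≤ ⟪F (y n), w - x (n+1)⟫ := by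
          rw [show -(‖x (n+1) - x n‖ * Cw)
            = (-(‖x (n+1) - x n‖ * (‖w‖ + R)))/lam from by rw [hCw]; ring,
            div_le_iff₀ hlam0]
          linarith [h1, hcs1]
        have h3 := hmono w (y n)
        rw [inner_sub_left] at h3
        have h4 : ⟪F (y n), w - y n⟫ = ⟪F (y n), w - x (n+1)⟫ + ⟪F (y n), x (n+1) - y n⟫ := by
          rw [← inner_add_right]; congr 1; abel
        have h5 : -(B2 * ‖x (n+1) - y n‖) ≤ ⟪F (y n), x (n+1) - y n⟫ := by
          have hcs := real_inner_le_norm (F (y n)) (y n - x (n+1))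
          have hm := mul_le_mul_of_nonneg_right (hFyb n) (norm_nonneg (y n - x (n+1)))
          have e9 : ⟪F (y n), x (n+1) - y n⟫ = -⟪F (y n), y n - x (n+1)⟫ := by
            rw [show x (n+1) - y n = -(y n - x (n+1)) from by abel, inner_neg_right]
          have en : ‖y n - x (n+1)‖ = ‖x (n+1) - y n‖ := norm_sub_rev _ _
          rw [en] at hcs hm
          rw [e9]
          linarith
        have h6 : ⟪F w, w - y n⟫ = ⟪F w, w - x (n+1)⟫ + ⟪F w, x (n+1) - y n⟫ := by
          rw [← inner_add_right]; congr 1; abel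
        have h7 : ⟪F w, x (n+1) - y n⟫ ≤ ‖F w‖ * ‖x (n+1) - y n‖ := real_inner_le_norm _ _
        have c1 : ⟪F (y n), w - x (n+1)⟫ + ⟪F (y n), x (n+1) - y n⟫
            - ‖F w‖ * ‖x (n+1) - y n‖ ≤ ⟪F w, w - x (n+1)⟫ := by linarith [h3, h4, h6, h7]
        simp only [hβ]
        linarith only [c1, h5, h2']
      have hβ0 : Tendsto β atTop (nhds 0) := by
        have h1 : Tendsto (fun n => ‖x (n+1) - x n‖ * Cw) atTop (nhds 0) := by
          have h := hD.mul_const Cw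
          simpa using h
        have h2 : Tendsto (fun n => (B2 + ‖F w‖) * ‖x (n+1) - y n‖) atTop (nhds 0) := by
          simpa using hE.const_mul (B2 + ‖F w‖)
        simpa using h1.add h2
      have hψ' : Tendsto (fun j => ψ j - 1) atTop atTop := by
        rw [tendsto_atTop]
        intro b
        filter_upwards [hψ.eventually_ge_atTop (b+1)] with j hj
        omega
      have hlhs : Tendsto (fun j => -β (ψ j - 1)) atTop (nhds 0) := by
        have h := (hβ0.comp hψ').neg
        simpa using h
      have hrhs : Tendsto (fun j => ⟪F w, w - x (ψ j)⟫) atTop (nhds ⟪F w, w - p⟫) := by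
        have h1 := hweak (F w)
        have h2 : Tendsto (fun j => ⟪F w, w⟫ - ⟪x (ψ j), F w⟫) atTop
            (nhds (⟪F w, w⟫ - ⟪p, F w⟫)) := tendsto_const_nhds.sub h1
        have e : ∀ q : H, ⟪F w, w - q⟫ = ⟪F w, w⟫ - ⟪q, F w⟫ := fun q => by
          rw [inner_sub_right, real_inner_comm q]
        rw [show ⟪F w, w - p⟫ = ⟪F w, w⟫ - ⟪p, F w⟫ from e p]
        exact h2.congr (fun j => (e (x (ψ j))).symm)
      refine le_of_tendsto_of_tendsto hlhs hrhs ?_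
      filter_upwards [hψ.eventually_ge_atTop 1] with j hj
      have h := hVI (ψ j - 1)
      rwa [Nat.sub_add_cancel hj] at h
    -- Minty's trick: pass to the VI at p
    intro w hw
    by_contra hneg
    push_neg at hneg
    set ε : ℝ := -⟪F p, w - p⟫ with hε
    have hε0 : 0 < ε := by simp only [hε]; linarith
    set t : ℝ := min 1 (ε/(2*(L*‖w - p‖^2+1))) with ht
    have ht0 : 0 < t := lt_min one_pos (by positivity)
    have ht1 : t ≤ 1 := min_le_left _ _
    have ht2 : t ≤ ε/(2*(L*‖w - p‖^2+1)) := min_le_right _ _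
    set wt : H := p + t • (w - p) with hwt
    have hwtC : wt ∈ C := by
      have h := hCconv hpC hw (by linarith : (0:ℝ) ≤ 1 - t) ht0.le (by ring)
      rw [hwt, show p + t • (w - p) = (1-t) • p + t • w from by module]
      exact h
    have hwtp : wt - p = t • (w - p) := by rw [hwt]; abel
    have h1 : 0 ≤ ⟪F wt, w - p⟫ := by
      have h := hMall wt hwtC
      rw [hwtp, real_inner_smul_right] at h
      exact nonneg_of_mul_nonneg_right h ht0
    have hn : ‖F p - F wt‖ ≤ L * (t*‖w - p‖) := by
      calc ‖F p - F wt‖ ≤ L*‖p - wt‖ := hlip p wt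
        _ = L*(t*‖w-p‖) := by
            rw [show p - wt = -(t • (w - p)) from by rw [hwt]; abel, norm_neg, norm_smul,
              Real.norm_eq_abs, abs_of_pos ht0]
    have hcs : ⟪F wt, w - p⟫ - ⟪F p, w - p⟫ ≤ ‖F p - F wt‖*‖w-p‖ := by
      have h := real_inner_le_norm (F wt - F p) (w - p)
      rw [inner_sub_left, norm_sub_rev (F wt)] at h
      linarith
    have h2 : -(L*t*‖w - p‖^2) ≤ ⟪F p, w - p⟫ := by
      have hmul := mul_le_mul_of_nonneg_right hn (norm_nonneg (w - p))
      have e : L*(t*‖w-p‖)*‖w-p‖ = L*t*‖w-p‖^2 := by ring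
      linarith [hmul, hcs, h1]
    have hpos : (0:ℝ) < L*‖w-p‖^2+1 := by positivity
    have h3 : L*t*‖w-p‖^2 ≤ ε/2 := by
      calc L*t*‖w-p‖^2 ≤ t*(L*‖w-p‖^2+1) := by
            rw [show L*t*‖w-p‖^2 = t*(L*‖w-p‖^2) from by ring]
            exact mul_le_mul_of_nonneg_left (by linarith [sq_nonneg ‖w-p‖]) ht0.le
        _ ≤ (ε/(2*(L*‖w-p‖^2+1)))*(L*‖w-p‖^2+1) := mul_le_mul_of_nonneg_right ht2 hpos.le
        _ = ε/2 := by field_simp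
    have h4 : ⟪F p, w - p⟫ = -ε := by simp only [hε]; ring
    linarith
  -- extract a weakly convergent subsequence
  obtain ⟨φ, hφ, p, hp⟩ := weak_compact_aux x R hxb
  obtain ⟨hpC, hpS⟩ := cluster p φ hφ.tendsto_atTop hp
  refine ⟨p, hpC, hpS, ?_⟩
  -- full weak convergence via Opial's argument
  have claim : ∀ v : H, Tendsto (fun n => ⟪x n, v⟫) atTop (nhds ⟪p, v⟫) := by
    intro v
    refine tendsto_of_subseq_tendsto (fun ns hns => ?_)
    obtain ⟨θ, hθ, q, hq⟩ := weak_compact_aux (fun j => x (ns j)) R (fun j => hxb (ns j))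
    have hcompθ : Tendsto (fun j => ns (θ j)) atTop atTop := hns.comp hθ.tendsto_atTop
    obtain ⟨hqC, hqS⟩ := cluster q (fun j => ns (θ j)) hcompθ hq
    -- lim ‖x n - p‖² and lim ‖x n - q‖² exist
    obtain ⟨gp, hgp⟩ := (master p hpC hpS).1
    obtain ⟨gq, hgq⟩ := (master q hqC hqS).1
    have hinner : Tendsto (fun n => ⟪x n, p - q⟫) atTop
        (nhds ((gq - gp + (‖p‖^2 - ‖q‖^2))/2)) := by
      have h1 := ((hgq.sub hgp).add_const (‖p‖^2 - ‖q‖^2)).div_const 2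
      refine h1.congr (fun n => ?_)
      rw [norm_sub_sq_real (x n) p, norm_sub_sq_real (x n) q, inner_sub_right]
      ring
    have hc1 : Tendsto (fun j => ⟪x (φ j), p - q⟫) atTop
        (nhds ((gq - gp + (‖p‖^2 - ‖q‖^2))/2)) := hinner.comp hφ.tendsto_atTop
    have hc2 : Tendsto (fun j => ⟪x (ns (θ j)), p - q⟫) atTop
        (nhds ((gq - gp + (‖p‖^2 - ‖q‖^2))/2)) := hinner.comp hcompθ
    have he1 : (gq - gp + (‖p‖^2 - ‖q‖^2))/2 = ⟪p, p - q⟫ := tendsto_nhds_unique hc1 (hp (p - q))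
    have he2 : (gq - gp + (‖p‖^2 - ‖q‖^2))/2 = ⟪q, p - q⟫ := tendsto_nhds_unique hc2 (hq (p - q))
    have hpq : p = q := by
      have h : ⟪p - q, p - q⟫ = 0 := by rw [inner_sub_left]; linarith
      have := inner_self_eq_zero.mp h
      exact sub_eq_zero.mp this
    exact ⟨θ, by rw [hpq]; exact hq v⟩
  intro f
  have hfv : ∀ q : H, f q = ⟪q, ((InnerProductSpace.toDual ℝ H).symm f : H)⟫ := fun q => by
    rw [real_inner_comm]; exact (InnerProductSpace.toDual_symm_apply).symm
  simp only [hfv]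
  exact claim _
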